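/- Let p ≥ 1 and 1 ≤ m ≤ p be integers, let λ₀ ∈ ℂ, and let B be a p×p matrix of complex-valued functions, each analytic in a neighbourhood of λ₀. If the rank of the matrix B(λ₀) is at most p − m, then the j-th derivative of the function λ ↦ det B(λ) vanishes at λ₀ for every 0 ≤ j ≤ m − 1; that is, det B(λ) has a zero of order at least m at λ₀. -/

import Mathlib

open scoped Matrix

open scoped Classical in
/-- Induction lemma: derivatives of `(z - z₀)^m * g z` vanish below order `m`. -/
lemma stmt10_aux (z₀ : ℂ) : ∀ (m : ℕ) (g : ℂ → ℂ), AnalyticAt ℂ g z₀ →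
    ∀ j < m, iteratedDeriv j (fun z => (z - z₀) ^ m * g z) z₀ = 0 := by
  intro m
  induction m with
  | zero => intro g _ j hj; omega
  | succ m ih =>
    intro g hg j hj
    match j with
    | 0 => simp [iteratedDeriv_zero]
    | (k + 1) =>
      rw [iteratedDeriv_succ']
      have hgd : AnalyticAt ℂ (deriv g) z₀ := by
        obtain ⟨s, hs, hgs⟩ := hg.eventually_analyticAt.exists_mem
        exact AnalyticOnNhd.deriv (fun x hx => hgs x hx) z₀ (mem_of_mem_nhds hs)
      have h : (deriv fun z => (z - z₀) ^ (m + 1) * g z) =ᶠ[nhds z₀]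
          (fun z => (z - z₀) ^ m * ((m + 1 : ℂ) * g z + (z - z₀) * deriv g z)) := by
        filter_upwards [hg.eventually_analyticAt] with z hz
        have h1 : HasDerivAt (fun z => (z - z₀) ^ (m + 1)) ((m + 1 : ℂ) * (z - z₀) ^ m) z := by
          simpa using (((hasDerivAt_id z).sub_const z₀).fun_pow (m + 1))
        have h2 := h1.fun_mul hz.differentiableAt.hasDerivAt
        rw [h2.deriv]
        ring
      rw [h.iteratedDeriv_eq]
      exact ih _ ((analyticAt_const.mul hg).add
        (((analyticAt_id.sub analyticAt_const)).mul hgd)) k (by omega)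

/-- Key step in the proof of Lemma 5.1: if an analytic matrix family has rank
at most p - m at z₀, then its determinant has a zero of order at least m
there. -/
theorem stmt10 (p m : ℕ) (hp : 1 ≤ p) (hm : 1 ≤ m) (hmp : m ≤ p) (z₀ : ℂ)
    (B : ℂ → Matrix (Fin p) (Fin p) ℂ)
    (hB : ∀ i j, AnalyticAt ℂ (fun z => B z i j) z₀)
    (hrank : (B z₀).rank ≤ p - m) :
    ∀ j < m, iteratedDeriv j (fun z => (B z).det) z₀ = 0 := by
  classical
  set M : Matrix (Fin p) (Fin p) ℂ := (B z₀)ᵀ with hM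
  set K : Submodule ℂ (Fin p → ℂ) := LinearMap.ker M.mulVecLin with hKdef
  have hK : m ≤ Module.finrank ℂ K := by
    have h1 := LinearMap.finrank_range_add_finrank_ker M.mulVecLin
    rw [Module.finrank_fin_fun] at h1
    have h3 : M.rank ≤ p - m := by rw [hM, Matrix.rank_transpose]; exact hrank
    have h2 : M.rank = Module.finrank ℂ (LinearMap.range M.mulVecLin) := rfl
    have h4 : Module.finrank ℂ K = Module.finrank ℂ (LinearMap.ker M.mulVecLin) := rfl
    omega
  obtain ⟨W, hW⟩ := Submodule.exists_isCompl K
  set d := Module.finrank ℂ K with hd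
  set d' := Module.finrank ℂ W with hd'
  have hdd : d + d' = p := by
    have h := Submodule.finrank_add_eq_of_isCompl hW
    rwa [Module.finrank_fin_fun] at h
  let bK : Module.Basis (Fin d) ℂ K := Module.finBasis ℂ K
  let bW : Module.Basis (Fin d') ℂ W := Module.finBasis ℂ W
  let b0 : Module.Basis (Fin d ⊕ Fin d') ℂ (Fin p → ℂ) :=
    (bK.prod bW).map (Submodule.prodEquivOfIsCompl K W hW)
  let b : Module.Basis (Fin p) ℂ (Fin p → ℂ) := b0.reindex (finSumFinEquiv.trans (finCongr hdd))
  have hbker : ∀ i : Fin p, (i : ℕ) < m → M.mulVecLin (b i) = 0 := by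
    intro i hi
    have hid : (i : ℕ) < d := lt_of_lt_of_le hi hK
    have hb : b i = (bK ⟨(i : ℕ), hid⟩ : Fin p → ℂ) := by
      have hcast : (finCongr hdd).symm i = Fin.castAdd d' ⟨(i : ℕ), hid⟩ := by
        ext; simp
      show b0.reindex _ i = _
      rw [Module.Basis.reindex_apply, Equiv.symm_trans_apply, hcast,
        finSumFinEquiv_symm_apply_castAdd]
      simp [b0, Module.Basis.map_apply, Module.Basis.prod_apply, Submodule.coe_prodEquivOfIsCompl']
    rw [hb]
    exact (bK ⟨(i : ℕ), hid⟩).2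
  set Q : Matrix (Fin p) (Fin p) ℂ := ((Pi.basisFun ℂ (Fin p)).toMatrix b)ᵀ with hQ
  have hQapp : ∀ i k, Q i k = b i k := by
    intro i k
    simp [hQ, Matrix.transpose_apply, Module.Basis.toMatrix_apply]
  have hQdet : Q.det ≠ 0 := by
    rw [hQ, Matrix.det_transpose]
    have := (Pi.basisFun ℂ (Fin p)).invertibleToMatrix b
    exact (Matrix.isUnit_det_of_invertible _).ne_zero
  set C : ℂ → Matrix (Fin p) (Fin p) ℂ := fun z => Q * B z with hC
  have hC0 : ∀ (i j : Fin p), (i : ℕ) < m → C z₀ i j = 0 := by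
    intro i j hi
    have h := congrFun (hbker i hi) j
    simp only [Matrix.mulVecLin_apply, Matrix.mulVec, dotProduct, Pi.zero_apply] at h
    show (Q * B z₀) i j = 0
    rw [Matrix.mul_apply, ← h]
    apply Finset.sum_congr rfl
    intro k _
    rw [hQapp, hM, Matrix.transpose_apply, mul_comm]
  have hCanalytic : ∀ i j, AnalyticAt ℂ (fun z => C z i j) z₀ := by
    intro i j
    show AnalyticAt ℂ (fun z => (Q * B z) i j) z₀
    simp only [Matrix.mul_apply]
    exact Finset.analyticAt_fun_sum _ fun k _ => analyticAt_const.mul (hB k j)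
  set E : ℂ → Matrix (Fin p) (Fin p) ℂ := fun z =>
    Matrix.of fun i j => if (i : ℕ) < m then dslope (fun w => C w i j) z₀ z else C z i j with hE
  have hEanalytic : ∀ i j, AnalyticAt ℂ (fun z => E z i j) z₀ := by
    intro i j
    by_cases hi : (i : ℕ) < m
    · have hcongr : (fun z => E z i j) = fun z => dslope (fun w => C w i j) z₀ z := by
        funext z
        show (if (i : ℕ) < m then dslope (fun w => C w i j) z₀ z else C z i j) = _
        rw [if_pos hi]
      rw [hcongr]
      obtain ⟨q, hq⟩ := hCanalytic i j
      exact ⟨q.fslope, hq.has_fpower_series_dslope_fslope⟩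
    · have hcongr : (fun z => E z i j) = fun z => C z i j := by
        funext z
        show (if (i : ℕ) < m then dslope (fun w => C w i j) z₀ z else C z i j) = _
        rw [if_neg hi]
      rw [hcongr]
      exact hCanalytic i j
  have hfac : ∀ z, C z = Matrix.of fun (i j : Fin p) => (if (i : ℕ) < m then z - z₀ else 1) * E z i j := by
    intro z
    ext i j
    show C z i j = (if (i : ℕ) < m then z - z₀ else 1)
      * (if (i : ℕ) < m then dslope (fun w => C w i j) z₀ z else C z i j)
    by_cases hi : (i : ℕ) < m
    · rw [if_pos hi, if_pos hi]
      have h := sub_smul_dslope (fun w => C w i j) z₀ z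
      rw [smul_eq_mul, hC0 i j hi, sub_zero] at h
      exact h.symm
    · rw [if_neg hi, if_neg hi, one_mul]
  have hcard : (Finset.univ.filter fun i : Fin p => (i : ℕ) < m).card = m := by
    have heq : (Finset.univ.filter fun i : Fin p => (i : ℕ) < m)
        = Finset.map (Fin.castLEEmb hmp) Finset.univ := by
      ext i
      simp only [Finset.mem_filter, Finset.mem_univ, true_and, Finset.mem_map,
        Fin.castLEEmb_apply]
      constructor
      · intro h; exact ⟨⟨(i : ℕ), h⟩, by ext; simp⟩
      · rintro ⟨a, rfl⟩; exact a.2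
    rw [heq, Finset.card_map, Finset.card_univ, Fintype.card_fin]
  have hdet : ∀ z, (C z).det = (z - z₀) ^ m * (E z).det := by
    intro z
    show (C z).det = _
    rw [hfac z, Matrix.det_mul_column, Finset.prod_ite, Finset.prod_const, Finset.prod_const,
      one_pow, mul_one, hcard]
  have key : ∀ z, (B z).det = (z - z₀) ^ m * ((Q.det)⁻¹ * (E z).det) := by
    intro z
    have h1 : Q.det * (B z).det = (z - z₀) ^ m * (E z).det := by
      rw [← Matrix.det_mul]
      exact hdet z
    field_simp
    linear_combination h1
  have hEdet : AnalyticAt ℂ (fun z => (E z).det) z₀ := by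
    have : (fun z => (E z).det)
        = fun z => ∑ σ : Equiv.Perm (Fin p), ((Equiv.Perm.sign σ : ℤ) : ℂ) * ∏ i, E z (σ i) i :=
      funext fun z => Matrix.det_apply' _
    rw [this]
    exact Finset.analyticAt_fun_sum _ fun σ _ =>
      analyticAt_const.mul (Finset.analyticAt_fun_prod _ fun i _ => hEanalytic (σ i) i)
  intro j hj
  have hfun : (fun z => (B z).det) = fun z => (z - z₀) ^ m * ((Q.det)⁻¹ * (E z).det) :=
    funext key
  rw [hfun]
  exact stmt10_aux z₀ m _ (analyticAt_const.mul hEdet) j hj
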